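/- Let P be a submonoid of a group G, and let G₀ := {g ∈ G : gP ∩ S ≠ ∅ and g⁻¹P ∩ S ≠ ∅ for every nonempty constructible right ideal S of P}. Then the following are equivalent: (1) for every g ∈ G₀ with g ≠ e and every p ∈ P, there exists q ∈ pP with qP ∩ gqP = ∅; (2) for all p, t ∈ P with p ≠ t, there exists s ∈ P such that psP ∩ tsP = ∅. -/

import Mathlib

namespace PaperToeplitz

variable {G : Type*} [Group G]

/-- A word `(p₁, p₂, …, p_{2k-1}, p_{2k})` in `P`, encoded as its list of consecutive pairs
`[(p₁,p₂), …, (p_{2k-1},p_{2k})]`. Concatenation of words is list append. -/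
abbrev Word (P : Submonoid G) : Type _ := List (P × P)

/-- The generalized left quotient `α̇ := p₁⁻¹ p₂ ⋯ p_{2k-1}⁻¹ p_{2k} ∈ G`.
A word is *neutral* if `α̇ = 1`. -/
def dotProd {P : Submonoid G} (α : Word P) : G :=
  (α.map fun x => ((x.1 : G))⁻¹ * (x.2 : G)).prod

/-- The reverse word `α̃ := (p_{2k}, p_{2k-1}, …, p₂, p₁)`. -/
def rev {P : Submonoid G} (α : Word P) : Word P :=
  α.reverse.map fun x => (x.2, x.1)

/-- The iterated quotient set
`Q(α) := {e, p_{2k}⁻¹p_{2k-1}, p_{2k}⁻¹p_{2k-1}p_{2k-2}⁻¹p_{2k-3}, …, p_{2k}⁻¹p_{2k-1}⋯p₂⁻¹p₁}`,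
realized as the set of prefix products. -/
def Qset {P : Submonoid G} (α : Word P) : Set G :=
  {g | ∃ n : ℕ, ((α.reverse.map fun x => ((x.2 : G))⁻¹ * (x.1 : G)).take n).prod = g}

/-- The left translate `xP = {xq : q ∈ P}` of `P`, as a subset of `G`. -/
def lcos (P : Submonoid G) (x : G) : Set G := {y : G | x⁻¹ * y ∈ P}

/-- The constructible ideal `K(α) := ⋂_{g ∈ Q(α)} gP` (a subset of `P` since `e ∈ Q(α)`). -/
def Kset {P : Submonoid G} (α : Word P) : Set G :=
  ⋂ g ∈ Qset α, lcos P g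

/-- The collection `𝔍(P)` of constructible right ideals of `P`. -/
def CIdeals (P : Submonoid G) : Set (Set G) := {S | ∃ α : Word P, Kset α = S}

end PaperToeplitz

namespace PaperToeplitz

/-- The subgroup-like subset
`G₀ := {g ∈ G : gP ∩ S ≠ ∅ and g⁻¹P ∩ S ≠ ∅ for every nonempty constructible ideal S}`. -/
def Gzero {G : Type*} [Group G] (P : Submonoid G) : Set G :=
  {g : G | ∀ S ∈ CIdeals P, S.Nonempty →
    (lcos P g ∩ S).Nonempty ∧ (lcos P g⁻¹ ∩ S).Nonempty}

section Aux

variable {G : Type*} [Group G] {P : Submonoid G}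

lemma mem_lcos' {x y : G} : y ∈ lcos P x ↔ x⁻¹ * y ∈ P := Iff.rfl

lemma one_mem_Qset' (α : Word P) : (1 : G) ∈ Qset α := ⟨0, rfl⟩

lemma mem_Kset' {α : Word P} {u : G} : u ∈ Kset α ↔ ∀ g ∈ Qset α, g⁻¹ * u ∈ P := by
  simp [Kset, lcos, Set.mem_iInter, Set.mem_setOf_eq]

lemma Kset_mem_P' {α : Word P} {u : G} (hu : u ∈ Kset α) : u ∈ P := by
  have := mem_Kset'.1 hu 1 (one_mem_Qset' α)
  simpa using this

lemma Kset_mul' {α : Word P} {u v : G} (hu : u ∈ Kset α) (hv : v ∈ P) :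
    u * v ∈ Kset α := by
  refine mem_Kset'.2 fun g hg => ?_
  have := P.mul_mem (mem_Kset'.1 hu g hg) hv
  simpa [mul_assoc] using this

lemma Qset_single' (p : P) : Qset ([((p, (1 : P)))] : Word P) = {(1 : G), (p : G)} := by
  ext g
  constructor
  · rintro ⟨n, rfl⟩
    match n with
    | 0 => simp
    | n + 1 => simp [Qset, List.take_succ_cons]
  · rintro (rfl | rfl)
    · exact ⟨0, rfl⟩
    · exact ⟨1, by simp⟩

lemma Kset_single' (p : P) : Kset ([((p, (1 : P)))] : Word P) = lcos P (p : G) := by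
  ext y
  rw [Kset, Qset_single']
  simp only [Set.mem_iInter, Set.mem_insert_iff, Set.mem_singleton_iff]
  constructor
  · intro h
    exact h (p : G) (Or.inr rfl)
  · intro h g hg
    rcases hg with rfl | rfl
    · have : (p : G) * ((p : G)⁻¹ * y) ∈ P := P.mul_mem p.2 h
      simpa [mem_lcos', mul_inv_cancel_left] using this
    · exact h

end Aux

/-- Equivalence of: (1) for every `g ∈ G₀ ∖ {e}` and every `p ∈ P` there is `q ∈ pP` with
`qP ∩ gqP = ∅`; and (2) for all `p ≠ t` in `P` there is `s ∈ P` with `psP ∩ tsP = ∅`. -/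
theorem statement10 {G : Type*} [Group G] (P : Submonoid G) :
    (∀ g ∈ Gzero P, g ≠ 1 → ∀ p : P, ∃ q ∈ lcos P (p : G),
        lcos P q ∩ lcos P (g * q) = ∅) ↔
    (∀ p t : P, p ≠ t → ∃ s : P,
        lcos P ((p : G) * (s : G)) ∩ lcos P ((t : G) * (s : G)) = ∅) := by
  constructor
  · -- (1) → (2)
    intro h p t hpt
    by_contra hcon
    push_neg at hcon
    have hc : ∀ s : P, (lcos P ((p : G) * (s : G)) ∩ lcos P ((t : G) * (s : G))).Nonempty := hcon
    set g : G := (p : G)⁻¹ * (t : G) with hgdef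
    have hgG0 : g ∈ Gzero P := by
      rintro S ⟨α, rfl⟩ ⟨u, hu⟩
      have huP : u ∈ P := Kset_mem_P' hu
      obtain ⟨z, hz1, hz2⟩ := hc ⟨u, huP⟩
      set x : G := ((p : G) * u)⁻¹ * z with hxdef
      set y : G := ((t : G) * u)⁻¹ * z with hydef
      have hx : x ∈ P := hz1
      have hy : y ∈ P := hz2
      have key : (p : G) * (u * x) = (t : G) * (u * y) := by
        rw [hxdef, hydef]; group
      have e1 : g⁻¹ * (u * x) = u * y := by
        rw [hgdef, mul_inv_rev, inv_inv, mul_assoc, key, inv_mul_cancel_left]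
      have e2 : g * (u * y) = u * x := by
        rw [hgdef, mul_assoc, ← key, inv_mul_cancel_left]
      constructor
      · refine ⟨u * x, ?_, Kset_mul' hu hx⟩
        show g⁻¹ * (u * x) ∈ P
        rw [e1]; exact P.mul_mem huP hy
      · refine ⟨u * y, ?_, Kset_mul' hu hy⟩
        show (g⁻¹)⁻¹ * (u * y) ∈ P
        rw [inv_inv, e2]; exact P.mul_mem huP hx
    have hg1 : g ≠ 1 := by
      intro h0
      exact hpt (Subtype.coe_injective (inv_mul_eq_one.mp h0))
    obtain ⟨q, hq, hdisj⟩ := h g hgG0 hg1 1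
    have hqP : q ∈ P := by simpa using (mem_lcos'.1 hq)
    obtain ⟨z, hz1, hz2⟩ := hcon ⟨q, hqP⟩
    have hmem : (p : G)⁻¹ * z ∈ lcos P q ∩ lcos P (g * q) := by
      constructor
      · show q⁻¹ * ((p : G)⁻¹ * z) ∈ P
        have hrw : q⁻¹ * ((p : G)⁻¹ * z) = ((p : G) * q)⁻¹ * z := by group
        rw [hrw]; exact hz1
      · show (g * q)⁻¹ * ((p : G)⁻¹ * z) ∈ P
        have hrw : (g * q)⁻¹ * ((p : G)⁻¹ * z) = ((t : G) * q)⁻¹ * z := by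
          rw [hgdef]; group
        rw [hrw]; exact hz2
    rw [hdisj] at hmem
    exact hmem
  · -- (2) → (1)
    intro h g hg hg1 p
    obtain ⟨-, c, hc1, hc2⟩ :=
      hg (lcos P (p : G)) ⟨[((p, (1 : P)))], Kset_single' p⟩
        ⟨(p : G), by show (p : G)⁻¹ * (p : G) ∈ P; simpa using P.one_mem⟩
    have hc2' : (p : G)⁻¹ * c ∈ P := hc2
    have hcP : c ∈ P := by
      have := P.mul_mem p.2 hc2'
      simpa [mul_inv_cancel_left] using this
    have hgc : g * c ∈ P := by
      have h' : (g⁻¹)⁻¹ * c ∈ P := hc1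
      simpa using h'
    have hne : (⟨c, hcP⟩ : P) ≠ ⟨g * c, hgc⟩ := by
      intro he
      have hcc : c = g * c := congrArg Subtype.val he
      exact hg1 (mul_eq_right.mp hcc.symm)
    obtain ⟨s, hs⟩ := h ⟨c, hcP⟩ ⟨g * c, hgc⟩ hne
    refine ⟨c * (s : G), ?_, ?_⟩
    · show (p : G)⁻¹ * (c * (s : G)) ∈ P
      rw [← mul_assoc]
      exact P.mul_mem hc2' s.2
    · rw [← mul_assoc]
      exact hs

end PaperToeplitz
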